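/- Let j : Y ⟶ X be a morphism of locally ringed spaces whose underlying continuous map is a closed topological embedding and all of whose stalk maps are surjective. If the locally ringed space Y is tidy, then j is a tidy morphism. -/

import Mathlib

open AlgebraicGeometry CategoryTheory TopologicalSpace Opposite

/-- A locally ringed space is *tidy* if for every open `V`, every section `g` over `V` and
every point `x ∈ V`: if the germ of `g` at every point of `V` lies in every power of the
maximal ideal of the stalk, then the germ of `g` at `x` is `0`. -/
def TidySpace (X : LocallyRingedSpace) : Prop :=
  ∀ (V : Opens X) (g : X.presheaf.obj (op V)) (x : X) (hx : x ∈ V),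
    (∀ (x' : X) (hx' : x' ∈ V) (N : ℕ),
      X.presheaf.germ V x' hx' g ∈
        (IsLocalRing.maximalIdeal (X.presheaf.stalk x')) ^ N) →
    X.presheaf.germ V x hx g = 0

/-- A morphism of locally ringed spaces is *tidy* if, for every open `U` in the target,
every section `f` over `U` and every point `w` of the source mapping into `U`: if at every
point `w'` mapping into `U` and every `N` the germ of `f` lies in `ker(φ♯_{w'}) + m^N`,
then the germ of `f` at the image of `w` lies in `ker(φ♯_w)`. -/
def TidyMorphism {W X : LocallyRingedSpace} (φ : W ⟶ X) : Prop :=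
  ∀ (U : Opens X) (f : X.presheaf.obj (op U)) (w : W) (hw : φ.base w ∈ U),
    (∀ (w' : W) (hw' : φ.base w' ∈ U) (N : ℕ),
      X.presheaf.germ U (φ.base w') hw' f ∈
        RingHom.ker (φ.stalkMap w').hom +
          (IsLocalRing.maximalIdeal (X.presheaf.stalk (φ.base w'))) ^ N) →
    X.presheaf.germ U (φ.base w) hw f ∈ RingHom.ker (φ.stalkMap w).hom

/-- If `j : Y ⟶ X` is a closed embedding of locally ringed spaces (closed topological
embedding with surjective stalk maps) and the locally ringed space `Y` is tidy, then
`j` is a tidy morphism. -/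
theorem tidyMorphism_of_tidySpace {Y X : LocallyRingedSpace} (j : Y ⟶ X)
    (hemb : Topology.IsClosedEmbedding j.base)
    (hsurj : ∀ y : Y, Function.Surjective (j.stalkMap y))
    (hY : TidySpace Y) :
    TidyMorphism j := by
  intro U f w hw hmem
  set V : Opens Y := (Opens.map j.base).obj U with hV
  set g : Y.presheaf.obj (op V) := j.c.app (op U) f with hg
  have key : ∀ (w' : Y) (hw' : w' ∈ V) (N : ℕ),
      Y.presheaf.germ V w' hw' g ∈
        (IsLocalRing.maximalIdeal (Y.presheaf.stalk w')) ^ N := by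
    intro w' hw' N
    obtain ⟨a, ha, b, hb, hab⟩ := Submodule.mem_sup.mp (hmem w' hw' N)
    have hger : Y.presheaf.germ V w' hw' g =
        j.stalkMap w' (X.presheaf.germ U (j.base w') hw' f) := by
      exact (LocallyRingedSpace.stalkMap_germ_apply j U w' hw' f).symm
    rw [hger, ← hab, map_add, RingHom.mem_ker.mp ha, zero_add]
    have h1 : Ideal.map (j.stalkMap w').hom
        (IsLocalRing.maximalIdeal (X.presheaf.stalk (j.base w'))) ≤
        IsLocalRing.maximalIdeal (Y.presheaf.stalk w') := by
      rw [Ideal.map_le_iff_le_comap]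
      intro c hc
      simp only [Ideal.mem_comap]
      intro hu
      exact hc ((isUnit_map_iff (j.stalkMap w').hom c).mp hu)
    have : (j.stalkMap w') b ∈ Ideal.map (j.stalkMap w').hom
        ((IsLocalRing.maximalIdeal (X.presheaf.stalk (j.base w'))) ^ N) :=
      Ideal.mem_map_of_mem _ hb
    rw [Ideal.map_pow] at this
    exact Ideal.pow_right_mono h1 N this
  have := hY V g w hw key
  rw [RingHom.mem_ker, LocallyRingedSpace.stalkMap_germ_apply]
  exact this
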